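/- Let v ∈ L⁶(ℝ³) ∩ D^{1,2}(ℝ³) and p ∈ L³(ℝ³) ∩ D^{1,3/2}(ℝ³) be axially symmetric and satisfy the stationary Euler equations (v·∇)v + ∇p = 0, div v = 0 a.e. in ℝ³. Then for almost every r₀ > 0, |p(r₀, z)| + |v(r₀, z)| → 0 as |z| → ∞, where (r, z) are cylindrical coordinates. -/

import Mathlib

open MeasureTheory Set Filter

/-- Partial derivative in the `r` (first) direction on the meridional half-plane. -/
noncomputable def dr (f : ℝ × ℝ → ℝ) (x : ℝ × ℝ) : ℝ := fderiv ℝ f x (1, 0)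

/-- Partial derivative in the `z` (second) direction on the meridional half-plane. -/
noncomputable def dz (f : ℝ × ℝ → ℝ) (x : ℝ × ℝ) : ℝ := fderiv ℝ f x (0, 1)

private lemma limit_zero_atTop {g : ℝ → ℝ} {q L : ℝ} (hq : 0 < q)
    (hgq : Integrable (fun z => |g z| ^ q))
    (hL : Tendsto g atTop (nhds L)) : L = 0 := by
  by_contra h
  have hL2 : (0:ℝ) < |L| / 2 := by
    have : 0 < |L| := abs_pos.mpr h
    linarith
  have hev : ∀ᶠ z in atTop, |L| / 2 ≤ |g z| :=
    hL.abs.eventually (eventually_ge_nhds (by linarith))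
  obtain ⟨N, hN⟩ := eventually_atTop.mp hev
  have hconst : Integrable (fun _ : ℝ => (|L| / 2) ^ q) (volume.restrict (Ici N)) := by
    refine (hgq.integrableOn (s := Ici N)).mono' aestronglyMeasurable_const
      ((ae_restrict_iff' measurableSet_Ici).mpr (ae_of_all _ fun z hz => ?_))
    rw [Real.norm_eq_abs, abs_of_nonneg (Real.rpow_nonneg (by positivity) _)]
    exact Real.rpow_le_rpow hL2.le (hN z hz) hq.le
  rw [integrable_const_iff] at hconst
  rcases hconst with h0 | hfin
  · exact (Real.rpow_pos_of_pos hL2 q).ne' h0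
  · have hfin := hfin.measure_univ_lt_top
    rw [Measure.restrict_apply_univ, Real.volume_Ici] at hfin
    exact lt_irrefl _ hfin

private lemma limit_zero_atBot {g : ℝ → ℝ} {q L : ℝ} (hq : 0 < q)
    (hgq : Integrable (fun z => |g z| ^ q))
    (hL : Tendsto g atBot (nhds L)) : L = 0 := by
  by_contra h
  have hL2 : (0:ℝ) < |L| / 2 := by
    have : 0 < |L| := abs_pos.mpr h
    linarith
  have hev : ∀ᶠ z in atBot, |L| / 2 ≤ |g z| :=
    hL.abs.eventually (eventually_ge_nhds (by linarith))
  obtain ⟨N, hN⟩ := eventually_atBot.mp hev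
  have hconst : Integrable (fun _ : ℝ => (|L| / 2) ^ q) (volume.restrict (Iic N)) := by
    refine (hgq.integrableOn (s := Iic N)).mono' aestronglyMeasurable_const
      ((ae_restrict_iff' measurableSet_Iic).mpr (ae_of_all _ fun z hz => ?_))
    rw [Real.norm_eq_abs, abs_of_nonneg (Real.rpow_nonneg (by positivity) _)]
    exact Real.rpow_le_rpow hL2.le (hN z hz) hq.le
  rw [integrable_const_iff] at hconst
  rcases hconst with h0 | hfin
  · exact (Real.rpow_pos_of_pos hL2 q).ne' h0
  · have hfin := hfin.measure_univ_lt_top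
    rw [Measure.restrict_apply_univ, Real.volume_Iic] at hfin
    exact lt_irrefl _ hfin

private lemma key1d {g : ℝ → ℝ} (hg : Differentiable ℝ g) (hg' : Integrable (deriv g))
    {q : ℝ} (hq : 0 < q) (hgq : Integrable (fun z => |g z| ^ q)) :
    Tendsto g (cocompact ℝ) (nhds 0) := by
  have hFTC : ∀ x : ℝ, g x = g 0 + ∫ t in (0:ℝ)..x, deriv g t := by
    intro x
    rw [intervalIntegral.integral_deriv_eq_sub (fun t _ => hg t) hg'.intervalIntegrable]
    ring
  have hTop : Tendsto g atTop (nhds (g 0 + ∫ t in Ioi (0:ℝ), deriv g t)) := by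
    have h := MeasureTheory.intervalIntegral_tendsto_integral_Ioi (0:ℝ)
      hg'.integrableOn tendsto_id
    refine ((tendsto_const_nhds (x := g 0)).add h).congr fun x => ?_
    simp only [id_eq]
    exact (hFTC x).symm
  have hBot : Tendsto g atBot (nhds (g 0 - ∫ t in Iic (0:ℝ), deriv g t)) := by
    have h := MeasureTheory.intervalIntegral_tendsto_integral_Iic (0:ℝ)
      hg'.integrableOn tendsto_id
    refine ((tendsto_const_nhds (x := g 0)).sub h).congr fun x => ?_
    simp only [id_eq]
    rw [hFTC x, intervalIntegral.integral_symm]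
    ring
  have e1 : g 0 + (∫ t in Ioi (0:ℝ), deriv g t) = 0 := limit_zero_atTop hq hgq hTop
  have e2 : g 0 - (∫ t in Iic (0:ℝ), deriv g t) = 0 := limit_zero_atBot hq hgq hBot
  rw [cocompact_eq_atBot_atTop, tendsto_sup]
  exact ⟨e2 ▸ hBot, e1 ▸ hTop⟩

private lemma young_ab (a b : ℝ) (ha : 0 ≤ a) (hb : 0 ≤ b) :
    a * b ≤ a ^ (3:ℕ) + b ^ ((3:ℝ)/2) := by
  rcases le_or_gt b (a ^ 2) with h | h
  · have h1 : a * b ≤ a ^ 3 := by nlinarith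
    exact h1.trans (le_add_of_nonneg_right (Real.rpow_nonneg hb _))
  · have hs : a ≤ Real.sqrt b := by
      rw [show a = Real.sqrt (a ^ 2) from (Real.sqrt_sq ha).symm]
      exact Real.sqrt_le_sqrt h.le
    have h1 : a * b ≤ Real.sqrt b * b := mul_le_mul_of_nonneg_right hs hb
    have h2 : Real.sqrt b * b = b ^ ((3:ℝ)/2) := by
      rw [Real.sqrt_eq_rpow, show b ^ ((3:ℝ)/2) = b ^ ((1:ℝ)/2 + 1) by norm_num,
        Real.rpow_add_of_nonneg hb (by norm_num) (by norm_num), Real.rpow_one]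
    calc a * b ≤ Real.sqrt b * b := h1
      _ = b ^ ((3:ℝ)/2) := h2
      _ ≤ a ^ (3:ℕ) + b ^ ((3:ℝ)/2) := le_add_of_nonneg_left (by positivity)

/-- If `f` is differentiable with `|f|³` and `|f'|^{3/2}` integrable, then `f → 0`. -/
private lemma tendsto_of_cube (f : ℝ → ℝ) (hf : Differentiable ℝ f)
    (h3 : Integrable (fun z => |f z| ^ (3:ℕ)))
    (hd : Integrable (fun z => |deriv f z| ^ ((3:ℝ)/2))) :
    Tendsto f (cocompact ℝ) (nhds 0) := by
  have hg : Differentiable ℝ (fun z => f z ^ 2) := hf.pow 2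
  have hderiv : ∀ z, deriv (fun z => f z ^ 2) z = 2 * f z * deriv f z := by
    intro z
    have h := ((hf z).hasDerivAt.fun_pow 2).deriv
    simpa using h
  have hd1 : Integrable (deriv fun z => f z ^ 2) := by
    have hmeas : AEStronglyMeasurable (deriv fun z => f z ^ 2) volume :=
      (measurable_deriv _).aestronglyMeasurable
    refine ((h3.add hd).const_mul 2).mono' hmeas (ae_of_all _ fun z => ?_)
    rw [hderiv z, Real.norm_eq_abs]
    have hy := young_ab |f z| |deriv f z| (abs_nonneg _) (abs_nonneg _)
    have h0 : |2 * f z * deriv f z| = 2 * (|f z| * |deriv f z|) := by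
      rw [abs_mul, abs_mul, abs_two]; ring
    rw [h0]
    simp only [Pi.add_apply]
    linarith
  have hgq : Integrable (fun z => |f z ^ 2| ^ ((3:ℝ)/2)) := by
    refine h3.congr (ae_of_all _ fun z => ?_)
    show |f z| ^ (3:ℕ) = |f z ^ 2| ^ ((3:ℝ)/2)
    rw [abs_pow, ← Real.rpow_natCast |f z| 2, ← Real.rpow_mul (abs_nonneg _),
      show ((2:ℕ):ℝ) * ((3:ℝ)/2) = ((3:ℕ):ℝ) by norm_num, Real.rpow_natCast]
  have key : Tendsto (fun z => f z ^ 2) (cocompact ℝ) (nhds 0) :=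
    key1d hg hd1 (by norm_num : (0:ℝ) < 3/2) hgq
  have hsq : Tendsto (fun z => Real.sqrt (f z ^ 2)) (cocompact ℝ) (nhds 0) := by
    have h := (Real.continuous_sqrt.tendsto 0).comp key
    simpa [Function.comp_def] using h
  have habs : Tendsto (fun z => |f z|) (cocompact ℝ) (nhds 0) := by
    refine squeeze_zero (fun z => abs_nonneg (f z)) (fun z => ?_) hsq
    exact le_of_eq (Real.sqrt_sq_eq_abs (f z)).symm
  have hneg : Tendsto (fun z => -|f z|) (cocompact ℝ) (nhds 0) := by simpa using habs.neg
  exact tendsto_of_tendsto_of_tendsto_of_le_of_le hneg habs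
    (fun z => neg_abs_le _) (fun z => le_abs_self _)

/-- If `f` is differentiable with `|f|⁶` and `|f'|²` integrable, then `f → 0`. -/
private lemma tendsto_of_six (f : ℝ → ℝ) (hf : Differentiable ℝ f)
    (h6 : Integrable (fun z => |f z| ^ (6:ℕ)))
    (hd : Integrable (fun z => |deriv f z| ^ (2:ℕ))) :
    Tendsto f (cocompact ℝ) (nhds 0) := by
  have hg : Differentiable ℝ (fun z => f z ^ 4) := hf.pow 4
  have hderiv : ∀ z, deriv (fun z => f z ^ 4) z = 4 * f z ^ 3 * deriv f z := by
    intro z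
    have h := ((hf z).hasDerivAt.fun_pow 4).deriv
    simpa using h
  have hd1 : Integrable (deriv fun z => f z ^ 4) := by
    have hmeas : AEStronglyMeasurable (deriv fun z => f z ^ 4) volume :=
      (measurable_deriv _).aestronglyMeasurable
    refine ((h6.add hd).const_mul 2).mono' hmeas (ae_of_all _ fun z => ?_)
    rw [hderiv z, Real.norm_eq_abs]
    have h0 : |4 * f z ^ 3 * deriv f z| = 4 * (|f z| ^ 3 * |deriv f z|) := by
      rw [abs_mul, abs_mul, ← abs_pow]
      simp [abs_of_nonneg]
      ring
    rw [h0]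
    simp only [Pi.add_apply]
    nlinarith [sq_nonneg (|f z| ^ 3 - |deriv f z|), abs_nonneg (f z), abs_nonneg (deriv f z),
      pow_nonneg (abs_nonneg (f z)) 3]
  have hgq : Integrable (fun z => |f z ^ 4| ^ ((3:ℝ)/2)) := by
    refine h6.congr (ae_of_all _ fun z => ?_)
    show |f z| ^ (6:ℕ) = |f z ^ 4| ^ ((3:ℝ)/2)
    rw [abs_pow, ← Real.rpow_natCast |f z| 4, ← Real.rpow_mul (abs_nonneg _),
      show ((4:ℕ):ℝ) * ((3:ℝ)/2) = ((6:ℕ):ℝ) by norm_num, Real.rpow_natCast]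
  have key : Tendsto (fun z => f z ^ 4) (cocompact ℝ) (nhds 0) :=
    key1d hg hd1 (by norm_num : (0:ℝ) < 3/2) hgq
  have k2 : Tendsto (fun z => f z ^ 2) (cocompact ℝ) (nhds 0) := by
    have h := (Real.continuous_sqrt.tendsto 0).comp key
    simp only [Function.comp_def, Real.sqrt_zero] at h
    refine h.congr fun z => ?_
    rw [show f z ^ 4 = (f z ^ 2) ^ 2 by ring, Real.sqrt_sq (by positivity)]
  have hsq : Tendsto (fun z => Real.sqrt (f z ^ 2)) (cocompact ℝ) (nhds 0) := by
    have h := (Real.continuous_sqrt.tendsto 0).comp k2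
    simpa [Function.comp_def] using h
  have habs : Tendsto (fun z => |f z|) (cocompact ℝ) (nhds 0) := by
    refine squeeze_zero (fun z => abs_nonneg (f z)) (fun z => ?_) hsq
    exact le_of_eq (Real.sqrt_sq_eq_abs (f z)).symm
  have hneg : Tendsto (fun z => -|f z|) (cocompact ℝ) (nhds 0) := by simpa using habs.neg
  exact tendsto_of_tendsto_of_tendsto_of_le_of_le hneg habs
    (fun z => neg_abs_le _) (fun z => le_abs_self _)

theorem stmt10 (vθ vr vz p : ℝ × ℝ → ℝ)
    (hv : Differentiable ℝ vθ) (hv' : Differentiable ℝ vr)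
    (hv'' : Differentiable ℝ vz) (hp : Differentiable ℝ p)
    (hint1 : IntegrableOn
      (fun x => x.1 * ((vθ x ^ 2 + vr x ^ 2 + vz x ^ 2) ^ 3 + |p x| ^ 3))
      {x : ℝ × ℝ | 0 < x.1} volume)
    (hint2 : IntegrableOn
      (fun x => x.1 * (‖fderiv ℝ vθ x‖ ^ 2 + ‖fderiv ℝ vr x‖ ^ 2 +
        ‖fderiv ℝ vz x‖ ^ 2 + ‖fderiv ℝ p x‖ ^ ((3:ℝ)/2)))
      {x : ℝ × ℝ | 0 < x.1} volume)
    (heuler : ∀ᵐ x ∂(volume.restrict {x : ℝ × ℝ | 0 < x.1}),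
      dz p x + vr x * dr vz x + vz x * dz vz x = 0 ∧
      dr p x - (vθ x) ^ 2 / x.1 + vr x * dr vr x + vz x * dz vr x = 0 ∧
      vθ x * vr x / x.1 + vr x * dr vθ x + vz x * dz vθ x = 0 ∧
      dr (fun y => y.1 * vr y) x + dz (fun y => y.1 * vz y) x = 0) :
    ∀ᵐ r₀ ∂(volume.restrict (Ioi (0:ℝ))),
      Tendsto (fun z : ℝ => |p (r₀, z)| +
        Real.sqrt (vθ (r₀, z) ^ 2 + vr (r₀, z) ^ 2 + vz (r₀, z) ^ 2))
        (cocompact ℝ) (nhds 0) := by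
  clear heuler
  have hSet : {x : ℝ × ℝ | 0 < x.1} = (Ioi (0:ℝ)) ×ˢ (univ : Set ℝ) := by
    ext x; simp
  have hμ : (volume : Measure (ℝ × ℝ)).restrict {x : ℝ × ℝ | 0 < x.1}
      = ((volume : Measure ℝ).restrict (Ioi 0)).prod (volume : Measure ℝ) := by
    rw [hSet, Measure.volume_eq_prod, ← Measure.restrict_prod_eq_prod_univ]
  have h1 : Integrable
      (fun x : ℝ × ℝ => x.1 * ((vθ x ^ 2 + vr x ^ 2 + vz x ^ 2) ^ 3 + |p x| ^ 3))
      (((volume : Measure ℝ).restrict (Ioi 0)).prod (volume : Measure ℝ)) := by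
    rw [← hμ]; exact hint1
  have h2 : Integrable
      (fun x : ℝ × ℝ => x.1 * (‖fderiv ℝ vθ x‖ ^ 2 + ‖fderiv ℝ vr x‖ ^ 2 +
        ‖fderiv ℝ vz x‖ ^ 2 + ‖fderiv ℝ p x‖ ^ ((3:ℝ)/2)))
      (((volume : Measure ℝ).restrict (Ioi 0)).prod (volume : Measure ℝ)) := by
    rw [← hμ]; exact hint2
  filter_upwards [h1.prod_right_ae, h2.prod_right_ae, ae_restrict_mem measurableSet_Ioi]
    with r₀ hs1 hs2 hr₀
  have hr : (0:ℝ) < r₀ := hr₀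
  have hs1' : Integrable (fun z =>
      (vθ (r₀, z) ^ 2 + vr (r₀, z) ^ 2 + vz (r₀, z) ^ 2) ^ 3 + |p (r₀, z)| ^ 3) volume := by
    have h := hs1.const_mul r₀⁻¹
    simpa [← mul_assoc, inv_mul_cancel₀ hr.ne'] using h
  have hs2' : Integrable (fun z =>
      ‖fderiv ℝ vθ (r₀, z)‖ ^ 2 + ‖fderiv ℝ vr (r₀, z)‖ ^ 2 +
        ‖fderiv ℝ vz (r₀, z)‖ ^ 2 + ‖fderiv ℝ p (r₀, z)‖ ^ ((3:ℝ)/2)) volume := by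
    have h := hs2.const_mul r₀⁻¹
    simpa [← mul_assoc, inv_mul_cancel₀ hr.ne'] using h
  have hc : Continuous fun z : ℝ => ((r₀, z) : ℝ × ℝ) := continuous_const.prodMk continuous_id
  have hdl : Differentiable ℝ (fun z : ℝ => ((r₀, z) : ℝ × ℝ)) :=
    (differentiable_const r₀).prodMk differentiable_id
  have hderiv_slice : ∀ (f : ℝ × ℝ → ℝ), Differentiable ℝ f → ∀ z : ℝ,
      deriv (fun z => f (r₀, z)) z = fderiv ℝ f (r₀, z) ((0:ℝ), (1:ℝ)) := by
    intro f hf z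
    have hline : HasDerivAt (fun z : ℝ => ((r₀, z) : ℝ × ℝ)) ((0:ℝ), (1:ℝ)) z :=
      (hasDerivAt_const z r₀).prodMk (hasDerivAt_id z)
    exact ((hf (r₀, z)).hasFDerivAt.comp_hasDerivAt z hline).deriv
  have hbound : ∀ (f : ℝ × ℝ → ℝ) (z : ℝ),
      |fderiv ℝ f (r₀, z) ((0:ℝ), (1:ℝ))| ≤ ‖fderiv ℝ f (r₀, z)‖ := by
    intro f z
    calc |fderiv ℝ f (r₀, z) ((0:ℝ), (1:ℝ))| = ‖fderiv ℝ f (r₀, z) ((0:ℝ), (1:ℝ))‖ :=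
          (Real.norm_eq_abs _).symm
      _ ≤ ‖fderiv ℝ f (r₀, z)‖ * ‖(((0:ℝ), (1:ℝ)) : ℝ × ℝ)‖ :=
          (fderiv ℝ f (r₀, z)).le_opNorm _
      _ = ‖fderiv ℝ f (r₀, z)‖ := by
          rw [Prod.norm_def]; simp
  -- pressure
  have hp3 : Integrable (fun z => |p (r₀, z)| ^ (3:ℕ)) volume := by
    refine hs1'.mono' (((hp.continuous.comp hc).abs.pow 3).aestronglyMeasurable)
      (ae_of_all _ fun z => ?_)
    rw [Real.norm_eq_abs, abs_of_nonneg (by positivity)]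
    exact le_add_of_nonneg_left (by positivity)
  have hpd : Integrable (fun z => |deriv (fun z => p (r₀, z)) z| ^ ((3:ℝ)/2)) volume := by
    refine hs2'.mono' (((Real.continuous_rpow_const (by norm_num)).measurable.comp
      (measurable_deriv _).abs).aestronglyMeasurable) (ae_of_all _ fun z => ?_)
    rw [Real.norm_eq_abs, abs_of_nonneg (Real.rpow_nonneg (abs_nonneg _) _)]
    have e1 : |deriv (fun z => p (r₀, z)) z| ^ ((3:ℝ)/2) ≤ ‖fderiv ℝ p (r₀, z)‖ ^ ((3:ℝ)/2) := by
      refine Real.rpow_le_rpow (abs_nonneg _) ?_ (by norm_num)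
      rw [hderiv_slice p hp z]; exact hbound p z
    exact e1.trans (le_add_of_nonneg_left (by positivity))
  have hpz : Tendsto (fun z => p (r₀, z)) (cocompact ℝ) (nhds 0) :=
    tendsto_of_cube _ (hp.comp hdl) hp3 hpd
  -- velocity components
  have hvcomp : ∀ (f : ℝ × ℝ → ℝ), Differentiable ℝ f →
      (∀ z : ℝ, f (r₀, z) ^ 2 ≤ vθ (r₀, z) ^ 2 + vr (r₀, z) ^ 2 + vz (r₀, z) ^ 2) →
      (∀ z : ℝ, ‖fderiv ℝ f (r₀, z)‖ ^ 2 ≤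
        ‖fderiv ℝ vθ (r₀, z)‖ ^ 2 + ‖fderiv ℝ vr (r₀, z)‖ ^ 2 + ‖fderiv ℝ vz (r₀, z)‖ ^ 2) →
      Tendsto (fun z => f (r₀, z)) (cocompact ℝ) (nhds 0) := by
    intro f hf hle hle'
    refine tendsto_of_six _ (hf.comp hdl) ?_ ?_
    · refine hs1'.mono' (((hf.continuous.comp hc).abs.pow 6).aestronglyMeasurable)
        (ae_of_all _ fun z => ?_)
      rw [Real.norm_eq_abs, abs_of_nonneg (by positivity)]
      have e : |f (r₀, z)| ^ (6:ℕ) = (f (r₀, z) ^ 2) ^ 3 := by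
        rw [show (6:ℕ) = 2 * 3 from rfl, pow_mul, sq_abs]
      rw [e]
      refine le_trans (pow_le_pow_left₀ (sq_nonneg _) (hle z) 3) ?_
      exact le_add_of_nonneg_right (by positivity)
    · refine hs2'.mono' (((measurable_deriv _).abs.pow_const 2).aestronglyMeasurable)
        (ae_of_all _ fun z => ?_)
      rw [Real.norm_eq_abs, abs_of_nonneg (by positivity)]
      have e1 : |deriv (fun z => f (r₀, z)) z| ^ (2:ℕ) ≤ ‖fderiv ℝ f (r₀, z)‖ ^ 2 := by
        refine pow_le_pow_left₀ (abs_nonneg _) ?_ 2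
        rw [hderiv_slice f hf z]; exact hbound f z
      refine le_trans (le_trans e1 (hle' z)) ?_
      exact le_add_of_nonneg_right (Real.rpow_nonneg (norm_nonneg _) _)
  have hθz := hvcomp vθ hv (fun z => by nlinarith [sq_nonneg (vr (r₀, z)), sq_nonneg (vz (r₀, z))])
    (fun z => by nlinarith [sq_nonneg ‖fderiv ℝ vr (r₀, z)‖, sq_nonneg ‖fderiv ℝ vz (r₀, z)‖])
  have hrz := hvcomp vr hv' (fun z => by nlinarith [sq_nonneg (vθ (r₀, z)), sq_nonneg (vz (r₀, z))])
    (fun z => by nlinarith [sq_nonneg ‖fderiv ℝ vθ (r₀, z)‖, sq_nonneg ‖fderiv ℝ vz (r₀, z)‖])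
  have hzz := hvcomp vz hv'' (fun z => by nlinarith [sq_nonneg (vθ (r₀, z)), sq_nonneg (vr (r₀, z))])
    (fun z => by nlinarith [sq_nonneg ‖fderiv ℝ vθ (r₀, z)‖, sq_nonneg ‖fderiv ℝ vr (r₀, z)‖])
  -- combine
  have hsum : Tendsto (fun z => vθ (r₀, z) ^ 2 + vr (r₀, z) ^ 2 + vz (r₀, z) ^ 2)
      (cocompact ℝ) (nhds 0) := by
    have h := ((hθz.mul hθz).add (hrz.mul hrz)).add (hzz.mul hzz)
    rw [show (0:ℝ) * 0 + 0 * 0 + 0 * 0 = 0 by norm_num] at h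
    exact h.congr fun z => by ring
  have hsqrt : Tendsto (fun z => Real.sqrt (vθ (r₀, z) ^ 2 + vr (r₀, z) ^ 2 + vz (r₀, z) ^ 2))
      (cocompact ℝ) (nhds 0) := by
    have h := (Real.continuous_sqrt.tendsto 0).comp hsum
    simpa [Function.comp_def] using h
  have habs : Tendsto (fun z => |p (r₀, z)|) (cocompact ℝ) (nhds 0) := by
    simpa using hpz.abs
  simpa using habs.add hsqrt
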